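/- If p ∈ ((q(1−2ε) − 4c(ε−δ))/(1+2ε), (q(1+2ε) + 4c(ε−δ))/(1−2ε)), then for sufficiently large n the probability that ALL n voters predict the true winner a₁ is at least 1 − n·exp(−2√(n−1)). -/

import Mathlib

set_option maxHeartbeats 1000000

open MeasureTheory ProbabilityTheory


lemma exp_quad_upper (l : ℝ) (h0 : 0 ≤ l) (h1 : l ≤ 1) : Real.exp l ≤ 1 + l + l^2 := by
  have := Real.exp_bound (x := l) (by rw [abs_of_nonneg h0]; exact h1) (n := 2) (by norm_num)
  have h2 : |Real.exp l - (1 + l)| ≤ l^2 * (3/(2*2)) := by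
    simpa [Finset.sum_range_succ, abs_of_nonneg h0] using this
  have := abs_le.1 h2
  nlinarith [sq_nonneg l]

lemma exp_quad_lower (l : ℝ) (h0 : 0 ≤ l) (h1 : l ≤ 1) : Real.exp (-l) ≤ 1 - l + l^2 := by
  have := Real.exp_bound (x := -l) (by rw [abs_neg, abs_of_nonneg h0]; exact h1) (n := 2) (by norm_num)
  have h2 : |Real.exp (-l) - (1 + -l)| ≤ l^2 * (3/(2*2)) := by
    simpa [Finset.sum_range_succ, abs_neg, abs_of_nonneg h0] using this
  have := abs_le.1 h2
  nlinarith [sq_nonneg l]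


lemma tail_upper {Ω : Type} [MeasurableSpace Ω] (μ : Measure Ω)
    (X : Ω → ℕ) (m : ℕ) (r lam v : ℝ) (hr0 : 0 ≤ r) (hr1 : r ≤ 1) (hl : 0 ≤ lam)
    (hpmf : ∀ k : ℕ, μ {ω | X ω = k} =
      ENNReal.ofReal ((m.choose k : ℝ) * r ^ k * (1 - r) ^ (m - k))) :
    μ {ω | v ≤ (X ω : ℝ)} ≤
      ENNReal.ofReal (Real.exp (-(lam * v)) * (1 - r + r * Real.exp lam) ^ m) := by
  have hr1' : (0:ℝ) ≤ 1 - r := by linarith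
  set B : ℕ → ENNReal := fun k => (ENNReal.ofReal
    (Real.exp (-(lam * v)) * ((m.choose k : ℝ) * (r * Real.exp lam) ^ k * (1 - r) ^ (m - k))))
    with hB
  have hsub : {ω | v ≤ (X ω : ℝ)} ⊆ ⋃ k : ℕ, {ω | X ω = k ∧ v ≤ (k : ℝ)} := by
    intro ω hω; exact Set.mem_iUnion.2 ⟨X ω, rfl, hω⟩
  have key : ∀ k : ℕ, μ {ω | X ω = k ∧ v ≤ (k : ℝ)} ≤ B k := by
    intro k
    by_cases h : v ≤ (k : ℝ)
    · have hset : {ω | X ω = k ∧ v ≤ (k : ℝ)} = {ω | X ω = k} := by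
        ext ω; simp [h]
      rw [hset, hpmf k, hB]
      apply ENNReal.ofReal_le_ofReal
      have hfk : 0 ≤ (m.choose k : ℝ) * r ^ k * (1 - r) ^ (m - k) := by positivity
      have hek : (r * Real.exp lam) ^ k = r ^ k * Real.exp (lam * k) := by
        rw [mul_pow, ← Real.exp_nat_mul]; ring_nf
      have h1 : (1:ℝ) ≤ Real.exp (-(lam * v)) * Real.exp (lam * k) := by
        rw [← Real.exp_add]
        apply Real.one_le_exp
        nlinarith
      calc (m.choose k : ℝ) * r ^ k * (1 - r) ^ (m - k)
          ≤ (Real.exp (-(lam * v)) * Real.exp (lam * k)) *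
              ((m.choose k : ℝ) * r ^ k * (1 - r) ^ (m - k)) := le_mul_of_one_le_left hfk h1
        _ = Real.exp (-(lam * v)) * ((m.choose k : ℝ) * (r ^ k * Real.exp (lam * k)) * (1 - r) ^ (m - k)) := by ring
        _ = Real.exp (-(lam * v)) * ((m.choose k : ℝ) * (r * Real.exp lam) ^ k * (1 - r) ^ (m - k)) := by
            rw [hek]
    · have hset : {ω | X ω = k ∧ v ≤ (k : ℝ)} = (∅ : Set Ω) := by
        ext ω; simp [h]
      rw [hset]; simp
  have hzero : ∀ b ∉ Finset.range (m + 1), B b = 0 := by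
    intro b hb
    have hlt : m < b := by
      have := Finset.mem_range.not.mp hb
      omega
    simp [hB, Nat.choose_eq_zero_of_lt hlt]
  calc μ {ω | v ≤ (X ω : ℝ)} ≤ μ (⋃ k : ℕ, {ω | X ω = k ∧ v ≤ (k : ℝ)}) := measure_mono hsub
    _ ≤ ∑' k : ℕ, μ {ω | X ω = k ∧ v ≤ (k : ℝ)} := measure_iUnion_le _
    _ ≤ ∑' k : ℕ, B k := ENNReal.tsum_le_tsum key
    _ = ∑ k ∈ Finset.range (m + 1), B k := tsum_eq_sum hzero
    _ = ENNReal.ofReal (∑ k ∈ Finset.range (m + 1),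
          Real.exp (-(lam * v)) * ((m.choose k : ℝ) * (r * Real.exp lam) ^ k * (1 - r) ^ (m - k))) := by
        rw [ENNReal.ofReal_sum_of_nonneg]
        intro i _
        have : (0:ℝ) ≤ r * Real.exp lam := by positivity
        positivity
    _ = ENNReal.ofReal (Real.exp (-(lam * v)) * (1 - r + r * Real.exp lam) ^ m) := by
        congr 1
        rw [← Finset.mul_sum]
        congr 1
        rw [add_comm (1 - r), add_pow]
        apply Finset.sum_congr rfl
        intro k _
        ring


lemma tail_lower {Ω : Type} [MeasurableSpace Ω] (μ : Measure Ω)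
    (X : Ω → ℕ) (m : ℕ) (r lam w : ℝ) (hr0 : 0 ≤ r) (hr1 : r ≤ 1) (hl : 0 ≤ lam)
    (hpmf : ∀ k : ℕ, μ {ω | X ω = k} =
      ENNReal.ofReal ((m.choose k : ℝ) * r ^ k * (1 - r) ^ (m - k))) :
    μ {ω | (X ω : ℝ) ≤ w} ≤
      ENNReal.ofReal (Real.exp (lam * w) * (1 - r + r * Real.exp (-lam)) ^ m) := by
  have hr1' : (0:ℝ) ≤ 1 - r := by linarith
  set B : ℕ → ENNReal := fun k => (ENNReal.ofReal
    (Real.exp (lam * w) * ((m.choose k : ℝ) * (r * Real.exp (-lam)) ^ k * (1 - r) ^ (m - k))))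
    with hB
  have hsub : {ω | (X ω : ℝ) ≤ w} ⊆ ⋃ k : ℕ, {ω | X ω = k ∧ (k : ℝ) ≤ w} := by
    intro ω hω; exact Set.mem_iUnion.2 ⟨X ω, rfl, hω⟩
  have key : ∀ k : ℕ, μ {ω | X ω = k ∧ (k : ℝ) ≤ w} ≤ B k := by
    intro k
    by_cases h : (k : ℝ) ≤ w
    · have hset : {ω | X ω = k ∧ (k : ℝ) ≤ w} = {ω | X ω = k} := by
        ext ω; simp [h]
      rw [hset, hpmf k, hB]
      apply ENNReal.ofReal_le_ofReal
      have hfk : 0 ≤ (m.choose k : ℝ) * r ^ k * (1 - r) ^ (m - k) := by positivity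
      have hek : (r * Real.exp (-lam)) ^ k = r ^ k * Real.exp (-(lam * k)) := by
        rw [mul_pow, ← Real.exp_nat_mul]; ring_nf
      have h1 : (1:ℝ) ≤ Real.exp (lam * w) * Real.exp (-(lam * k)) := by
        rw [← Real.exp_add]
        apply Real.one_le_exp
        nlinarith
      calc (m.choose k : ℝ) * r ^ k * (1 - r) ^ (m - k)
          ≤ (Real.exp (lam * w) * Real.exp (-(lam * k))) *
              ((m.choose k : ℝ) * r ^ k * (1 - r) ^ (m - k)) := le_mul_of_one_le_left hfk h1
        _ = Real.exp (lam * w) * ((m.choose k : ℝ) * (r ^ k * Real.exp (-(lam * k))) * (1 - r) ^ (m - k)) := by ring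
        _ = Real.exp (lam * w) * ((m.choose k : ℝ) * (r * Real.exp (-lam)) ^ k * (1 - r) ^ (m - k)) := by
            rw [hek]
    · have hset : {ω | X ω = k ∧ (k : ℝ) ≤ w} = (∅ : Set Ω) := by
        ext ω; simp [h]
      rw [hset]; simp
  have hzero : ∀ b ∉ Finset.range (m + 1), B b = 0 := by
    intro b hb
    have hlt : m < b := by
      have := Finset.mem_range.not.mp hb
      omega
    simp [hB, Nat.choose_eq_zero_of_lt hlt]
  calc μ {ω | (X ω : ℝ) ≤ w} ≤ μ (⋃ k : ℕ, {ω | X ω = k ∧ (k : ℝ) ≤ w}) := measure_mono hsub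
    _ ≤ ∑' k : ℕ, μ {ω | X ω = k ∧ (k : ℝ) ≤ w} := measure_iUnion_le _
    _ ≤ ∑' k : ℕ, B k := ENNReal.tsum_le_tsum key
    _ = ∑ k ∈ Finset.range (m + 1), B k := tsum_eq_sum hzero
    _ = ENNReal.ofReal (∑ k ∈ Finset.range (m + 1),
          Real.exp (lam * w) * ((m.choose k : ℝ) * (r * Real.exp (-lam)) ^ k * (1 - r) ^ (m - k))) := by
        rw [ENNReal.ofReal_sum_of_nonneg]
        intro i _
        have : (0:ℝ) ≤ r * Real.exp (-lam) := by positivity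
        positivity
    _ = ENNReal.ofReal (Real.exp (lam * w) * (1 - r + r * Real.exp (-lam)) ^ m) := by
        congr 1
        rw [← Finset.mul_sum]
        congr 1
        rw [add_comm (1 - r), add_pow]
        apply Finset.sum_congr rfl
        intro k _
        ring

lemma tail_upper_exp {Ω : Type} [MeasurableSpace Ω] (μ : Measure Ω)
    (X : Ω → ℕ) (m : ℕ) (r lam t : ℝ) (hr0 : 0 ≤ r) (hr1 : r ≤ 1)
    (hl : 0 ≤ lam) (hl1 : lam ≤ 1)
    (hpmf : ∀ k : ℕ, μ {ω | X ω = k} =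
      ENNReal.ofReal ((m.choose k : ℝ) * r ^ k * (1 - r) ^ (m - k))) :
    μ {ω | (m : ℝ) * r + t ≤ (X ω : ℝ)} ≤
      ENNReal.ofReal (Real.exp (-(lam * t) + m * r * lam ^ 2)) := by
  refine le_trans (tail_upper μ X m r lam ((m:ℝ)*r + t) hr0 hr1 hl hpmf) ?_
  apply ENNReal.ofReal_le_ofReal
  have he1 : (1:ℝ) ≤ Real.exp lam := Real.one_le_exp hl
  have hb0 : (0:ℝ) ≤ 1 - r + r * Real.exp lam := by nlinarith
  have hb : 1 - r + r * Real.exp lam ≤ Real.exp (r * (lam + lam^2)) := by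
    have h1 : 1 - r + r * Real.exp lam ≤ 1 + r * (lam + lam^2) := by
      have := exp_quad_upper lam hl hl1; nlinarith
    have h2 := Real.add_one_le_exp (r * (lam + lam^2))
    linarith
  calc Real.exp (-(lam * ((m:ℝ)*r + t))) * (1 - r + r * Real.exp lam) ^ m
      ≤ Real.exp (-(lam * ((m:ℝ)*r + t))) * Real.exp (r * (lam + lam^2)) ^ m := by
        apply mul_le_mul_of_nonneg_left _ (Real.exp_nonneg _)
        exact pow_le_pow_left₀ hb0 hb m
    _ = Real.exp (-(lam * ((m:ℝ)*r + t)) + m * (r * (lam + lam^2))) := by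
        rw [← Real.exp_nat_mul, ← Real.exp_add]
    _ ≤ Real.exp (-(lam * t) + m * r * lam ^ 2) := by
        exact Real.exp_le_exp.2 (le_of_eq (by ring))
  
lemma tail_lower_exp {Ω : Type} [MeasurableSpace Ω] (μ : Measure Ω)
    (X : Ω → ℕ) (m : ℕ) (r lam t : ℝ) (hr0 : 0 ≤ r) (hr1 : r ≤ 1)
    (hl : 0 ≤ lam) (hl1 : lam ≤ 1)
    (hpmf : ∀ k : ℕ, μ {ω | X ω = k} =
      ENNReal.ofReal ((m.choose k : ℝ) * r ^ k * (1 - r) ^ (m - k))) :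
    μ {ω | (X ω : ℝ) ≤ (m : ℝ) * r - t} ≤
      ENNReal.ofReal (Real.exp (-(lam * t) + m * r * lam ^ 2)) := by
  refine le_trans (tail_lower μ X m r lam ((m:ℝ)*r - t) hr0 hr1 hl hpmf) ?_
  apply ENNReal.ofReal_le_ofReal
  have he0 : (0:ℝ) ≤ Real.exp (-lam) := Real.exp_nonneg _
  have hb0 : (0:ℝ) ≤ 1 - r + r * Real.exp (-lam) := by nlinarith
  have hb : 1 - r + r * Real.exp (-lam) ≤ Real.exp (r * (lam^2 - lam)) := by
    have h1 : 1 - r + r * Real.exp (-lam) ≤ 1 + r * (lam^2 - lam) := by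
      have := exp_quad_lower lam hl hl1; nlinarith
    have h2 := Real.add_one_le_exp (r * (lam^2 - lam))
    linarith
  calc Real.exp (lam * ((m:ℝ)*r - t)) * (1 - r + r * Real.exp (-lam)) ^ m
      ≤ Real.exp (lam * ((m:ℝ)*r - t)) * Real.exp (r * (lam^2 - lam)) ^ m := by
        apply mul_le_mul_of_nonneg_left _ (Real.exp_nonneg _)
        exact pow_le_pow_left₀ hb0 hb m
    _ = Real.exp (lam * ((m:ℝ)*r - t) + m * (r * (lam^2 - lam))) := by
        rw [← Real.exp_nat_mul, ← Real.exp_add]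
    _ ≤ Real.exp (-(lam * t) + m * r * lam ^ 2) := by
        exact Real.exp_le_exp.2 (le_of_eq (by ring))

/-- Influential media, all voters unsurprised: if p lies in the interval
((q(1−2ε) − 4c(ε−δ))/(1+2ε), (q(1+2ε) + 4c(ε−δ))/(1−2ε)), then for all sufficiently
large n the probability that every one of the n voters predicts the true winner a₁
is at least 1 − n exp(−2√(n−1)). -/
theorem all_voters_unsurprised (ε c δ p q : ℝ)
    (hε : ε ∈ Set.Ioo (0:ℝ) (1/2)) (hc : 0 < c)
    (hp : p ∈ Set.Ioo (0:ℝ) 1) (hq : q ∈ Set.Ioo (0:ℝ) 1)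
    (hcond : p ∈ Set.Ioo ((q * (1 - 2*ε) - 4*c*(ε - δ)) / (1 + 2*ε))
                         ((q * (1 + 2*ε) + 4*c*(ε - δ)) / (1 - 2*ε))) :
    ∃ n₀ : ℕ, 2 ≤ n₀ ∧ ∀ n : ℕ, n₀ ≤ n → ∀ m1 m2 : ℕ, 1 ≤ m1 → 1 ≤ m2 →
      (m1 : ℝ) = n * (1/2 + ε) → (m2 : ℝ) = n * (1/2 - ε) →
      ∀ (Ω : Type) [MeasurableSpace Ω] (μ : Measure Ω), IsProbabilityMeasure μ →
      ∀ (M1 M2 : Fin m1 → Ω → ℕ) (L1 L2 : Fin m2 → Ω → ℕ),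
      (∀ i, Measurable (M1 i)) → (∀ i, Measurable (M2 i)) →
      (∀ i, Measurable (L1 i)) → (∀ i, Measurable (L2 i)) →
      (∀ i, ∀ k : ℕ, μ {ω | M1 i ω = k} =
        ENNReal.ofReal ((m1 - 1).choose k * p ^ k * (1 - p) ^ (m1 - 1 - k))) →
      (∀ i, ∀ k : ℕ, μ {ω | M2 i ω = k} =
        ENNReal.ofReal (m2.choose k * q ^ k * (1 - q) ^ (m2 - k))) →
      (∀ i, ∀ k : ℕ, μ {ω | L1 i ω = k} =
        ENNReal.ofReal (m1.choose k * q ^ k * (1 - q) ^ (m1 - k))) →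
      (∀ i, ∀ k : ℕ, μ {ω | L2 i ω = k} =
        ENNReal.ofReal ((m2 - 1).choose k * p ^ k * (1 - p) ^ (m2 - 1 - k))) →
      (∀ i, IndepFun (M1 i) (M2 i) μ) → (∀ i, IndepFun (L1 i) (L2 i) μ) →
      ENNReal.ofReal (1 - (n : ℝ) * Real.exp (-2 * Real.sqrt ((n : ℝ) - 1))) ≤
        μ {ω | (∀ i : Fin m1, (M2 i ω : ℝ) - (M1 i ω : ℝ) < 2*c*(n : ℝ)*(ε - δ) + 1) ∧
               (∀ i : Fin m2, (L2 i ω : ℝ) - (L1 i ω : ℝ) < 2*c*(n : ℝ)*(ε - δ) - 1)} := by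
  obtain ⟨hε0, hε1⟩ := hε
  obtain ⟨hp0, hp1⟩ := hp
  obtain ⟨hq0, hq1⟩ := hq
  obtain ⟨hcl, hcr⟩ := hcond
  have h2ε : (0:ℝ) < 1 + 2*ε := by linarith
  have h2ε' : (0:ℝ) < 1 - 2*ε := by linarith
  set α₁ : ℝ := ((1+2*ε)*p - (1-2*ε)*q + 4*c*(ε-δ))/2 with hα₁
  set α₂ : ℝ := ((1+2*ε)*q - (1-2*ε)*p + 4*c*(ε-δ))/2 with hα₂
  have hα₁pos : 0 < α₁ := by
    have := (div_lt_iff₀ h2ε).mp hcl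
    rw [hα₁]; linarith
  have hα₂pos : 0 < α₂ := by
    have := (lt_div_iff₀ h2ε').mp hcr
    rw [hα₂]; linarith
  set β : ℝ := min (min α₁ α₂) 1 with hβ
  have hβ0 : 0 < β := lt_min (lt_min hα₁pos hα₂pos) one_pos
  have hβ1 : β ≤ 1 := min_le_right _ _
  have hβa1 : β ≤ α₁ := le_trans (min_le_left _ _) (min_le_left _ _)
  have hβa2 : β ≤ α₂ := le_trans (min_le_left _ _) (min_le_right _ _)
  refine ⟨max 2 (Nat.ceil ((256/β^2)^2 + 128/β^2 + 2/β)), le_max_left _ _, ?_⟩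
  intro n hn m1 m2 hm1 hm2 hm1e hm2e Ω _ μ hμ M1 M2 L1 L2 hM1m hM2m hL1m hL2m
    hM1d hM2d hL1d hL2d hind1 hind2
  haveI := hμ
  -- numeric facts about n
  have hn2 : 2 ≤ n := le_trans (le_max_left _ _) hn
  have hnceil : ((256/β^2)^2 + 128/β^2 + 2/β : ℝ) ≤ n :=
    Nat.ceil_le.mp (le_trans (le_max_right _ _) hn)
  have hβ2 : (0:ℝ) < β^2 := by positivity
  have ht1 : ((256/β^2)^2 : ℝ) ≤ n := by
    have h1 : (0:ℝ) ≤ 128/β^2 := by positivity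
    have h2 : (0:ℝ) ≤ 2/β := by positivity
    linarith
  have ht2 : (128:ℝ) ≤ n * β^2 := by
    have h1 : (0:ℝ) ≤ (256/β^2)^2 := by positivity
    have h2 : (0:ℝ) ≤ 2/β := by positivity
    have : (128:ℝ)/β^2 ≤ n := by linarith
    calc (128:ℝ) = 128/β^2 * β^2 := by field_simp
      _ ≤ n * β^2 := by apply mul_le_mul_of_nonneg_right this (le_of_lt hβ2)
  have ht3 : (2:ℝ) ≤ n * β := by
    have h1 : (0:ℝ) ≤ (256/β^2)^2 := by positivity
    have h2 : (0:ℝ) ≤ 128/β^2 := by positivity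
    have : (2:ℝ)/β ≤ n := by linarith
    calc (2:ℝ) = 2/β * β := by field_simp
      _ ≤ n * β := mul_le_mul_of_nonneg_right this (le_of_lt hβ0)
  have hn0 : (0:ℝ) ≤ n := Nat.cast_nonneg n
  have hsqrt : 2 * Real.sqrt n ≤ n * β^2 / 128 := by
    have hs : 256/β^2 ≤ Real.sqrt n := by
      rw [Real.le_sqrt (by positivity : (0:ℝ) ≤ 256/β^2) hn0]
      exact ht1
    have hss : Real.sqrt n * Real.sqrt n = n := Real.mul_self_sqrt hn0
    have h1 := mul_le_mul_of_nonneg_right hs (Real.sqrt_nonneg n)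
    rw [hss] at h1
    have h2 : 2 * Real.sqrt n = β^2/128 * (256/β^2 * Real.sqrt n) := by
      field_simp; ring
    rw [h2]
    calc β^2/128 * (256/β^2 * Real.sqrt n) ≤ β^2/128 * n := by
          apply mul_le_mul_of_nonneg_left h1 (by positivity)
      _ = n * β^2/128 := by ring
  have hexp2 : 2 * Real.exp (-(n*β^2/64)) ≤ Real.exp (-2 * Real.sqrt ((n:ℝ)-1)) := by
    have hlog : Real.log 2 < 1 := by
      have := Real.log_two_lt_d9; linarith
    have hmono : Real.sqrt ((n:ℝ)-1) ≤ Real.sqrt n := Real.sqrt_le_sqrt (by linarith)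
    have h1 : (1:ℝ) ≤ n * β^2/128 := by linarith
    rw [show (2:ℝ) * Real.exp (-(n*β^2/64)) =
        Real.exp (Real.log 2 + -(n*β^2/64)) by
      rw [Real.exp_add, Real.exp_log (by norm_num : (0:ℝ) < 2)]]
    apply Real.exp_le_exp.2
    linarith
  -- structural facts
  have hm1c : ((m1 - 1 : ℕ) : ℝ) = (m1:ℝ) - 1 := by
    rw [Nat.cast_sub hm1]; norm_num
  have hm2c : ((m2 - 1 : ℕ) : ℝ) = (m2:ℝ) - 1 := by
    rw [Nat.cast_sub hm2]; norm_num
  have hm1le : (m1:ℝ) ≤ n := by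
    rw [hm1e]
    have := mul_le_mul_of_nonneg_left (show (1:ℝ)/2+ε ≤ 1 by linarith) hn0
    simpa using this
  have hm2le : (m2:ℝ) ≤ n := by
    rw [hm2e]
    have := mul_le_mul_of_nonneg_left (show (1:ℝ)/2-ε ≤ 1 by linarith) hn0
    simpa using this
  have hm2q : (m2:ℝ)*q ≤ n := by
    have h := mul_le_mul_of_nonneg_left (le_of_lt hq1) (Nat.cast_nonneg m2 : (0:ℝ) ≤ m2)
    rw [mul_one] at h; linarith
  have hm1q : (m1:ℝ)*q ≤ n := by
    have h := mul_le_mul_of_nonneg_left (le_of_lt hq1) (Nat.cast_nonneg m1 : (0:ℝ) ≤ m1)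
    rw [mul_one] at h; linarith
  have hm1p' : ((m1 - 1 : ℕ):ℝ)*p ≤ n := by
    have h := mul_le_mul_of_nonneg_left (le_of_lt hp1) (Nat.cast_nonneg (m1-1) : (0:ℝ) ≤ (m1-1:ℕ))
    rw [mul_one] at h
    have : ((m1 - 1 : ℕ):ℝ) ≤ n := by rw [hm1c]; linarith
    linarith
  have hm2p' : ((m2 - 1 : ℕ):ℝ)*p ≤ n := by
    have h := mul_le_mul_of_nonneg_left (le_of_lt hp1) (Nat.cast_nonneg (m2-1) : (0:ℝ) ≤ (m2-1:ℕ))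
    rw [mul_one] at h
    have : ((m2 - 1 : ℕ):ℝ) ≤ n := by rw [hm2c]; linarith
    linarith
  have hm12 : m1 + m2 = n := by
    have : ((m1 + m2 : ℕ) : ℝ) = (n:ℝ) := by push_cast; rw [hm1e, hm2e]; ring
    exact_mod_cast this
  set lam : ℝ := β/8 with hlam
  set t : ℝ := n*β/4 with ht
  have hlam0 : 0 ≤ lam := by positivity
  have hlam1 : lam ≤ 1 := by rw [hlam]; linarith
  have hexpeq : -(lam * t) + (n:ℝ) * lam^2 = -(n*β^2/32) + n*β^2/64 := by
    rw [hlam, ht]; ring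
  set E : ENNReal := ENNReal.ofReal (Real.exp (-(n*β^2/64))) with hE
  set e2 : ENNReal := ENNReal.ofReal (Real.exp (-2 * Real.sqrt ((n:ℝ)-1))) with he2
  have h2E : E + E ≤ e2 := by
    rw [hE, he2, ← ENNReal.ofReal_add (Real.exp_nonneg _) (Real.exp_nonneg _)]
    · apply ENNReal.ofReal_le_ofReal; linarith
  -- single tail bound helper
  have tailE : ∀ (X : Ω → ℕ) (m : ℕ) (r : ℝ), 0 ≤ r → r ≤ 1 → (m:ℝ) * r ≤ n →
      (∀ k : ℕ, μ {ω | X ω = k} =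
        ENNReal.ofReal ((m.choose k : ℝ) * r ^ k * (1 - r) ^ (m - k))) →
      μ {ω | (m : ℝ) * r + t ≤ (X ω : ℝ)} ≤ E := by
    intro X m r hr0 hr1 hmr hpmf
    refine le_trans (tail_upper_exp μ X m r lam t hr0 hr1 hlam0 hlam1 hpmf) ?_
    apply ENNReal.ofReal_le_ofReal
    apply Real.exp_le_exp.2
    have : (m:ℝ) * r * lam^2 ≤ n * lam^2 := mul_le_mul_of_nonneg_right hmr (sq_nonneg lam)
    have h64 : -(lam*t) + (n:ℝ)*lam^2 ≤ -(n*β^2/64) := by rw [hexpeq]; linarith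
    linarith
  have tailE' : ∀ (X : Ω → ℕ) (m : ℕ) (r : ℝ), 0 ≤ r → r ≤ 1 → (m:ℝ) * r ≤ n →
      (∀ k : ℕ, μ {ω | X ω = k} =
        ENNReal.ofReal ((m.choose k : ℝ) * r ^ k * (1 - r) ^ (m - k))) →
      μ {ω | (X ω : ℝ) ≤ (m : ℝ) * r - t} ≤ E := by
    intro X m r hr0 hr1 hmr hpmf
    refine le_trans (tail_lower_exp μ X m r lam t hr0 hr1 hlam0 hlam1 hpmf) ?_
    apply ENNReal.ofReal_le_ofReal
    apply Real.exp_le_exp.2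
    have : (m:ℝ) * r * lam^2 ≤ n * lam^2 := mul_le_mul_of_nonneg_right hmr (sq_nonneg lam)
    have h64 : -(lam*t) + (n:ℝ)*lam^2 ≤ -(n*β^2/64) := by rw [hexpeq]; linarith
    linarith
  -- per voter class 1
  have voter1 : ∀ i : Fin m1,
      μ {ω | (M2 i ω : ℝ) - (M1 i ω : ℝ) < 2*c*(n:ℝ)*(ε-δ) + 1}ᶜ ≤ e2 := by
    intro i
    set A := {ω | (m2 : ℝ) * q + t ≤ (M2 i ω : ℝ)} with hA
    set C := {ω | (M1 i ω : ℝ) ≤ ((m1 - 1 : ℕ) : ℝ) * p - t} with hC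
    have hsub : {ω | (M2 i ω : ℝ) - (M1 i ω : ℝ) < 2*c*(n:ℝ)*(ε-δ) + 1}ᶜ ⊆ A ∪ C := by
      intro ω hω
      simp only [Set.mem_compl_iff, Set.mem_setOf_eq, not_lt] at hω
      by_contra hAC
      simp only [hA, hC, Set.mem_union, Set.mem_setOf_eq, not_le, not_or] at hAC
      obtain ⟨h1, h2⟩ := hAC
      have hmean : (m2:ℝ)*q - (m1:ℝ)*p = 2*c*n*(ε-δ) - n*α₁ := by
        rw [hm1e, hm2e, hα₁]; ring
      have hba : (n:ℝ)*β ≤ n*α₁ := mul_le_mul_of_nonneg_left hβa1 hn0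
      rw [hm1c] at h2
      rw [ht] at h1 h2
      have e1 : ((m1:ℝ) - 1)*p = (m1:ℝ)*p - p := by ring
      linarith
    have hA' : μ A ≤ E := by
      rw [hA]
      apply tailE (M2 i) m2 q (le_of_lt hq0) (le_of_lt hq1) hm2q (hM2d i)
    have hC' : μ C ≤ E := by
      rw [hC]
      exact tailE' (M1 i) (m1 - 1) p (le_of_lt hp0) (le_of_lt hp1) hm1p' (hM1d i)
    calc μ _ ≤ μ (A ∪ C) := measure_mono hsub
      _ ≤ μ A + μ C := measure_union_le _ _
      _ ≤ E + E := add_le_add hA' hC'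
      _ ≤ e2 := h2E
  -- per voter class 2
  have voter2 : ∀ i : Fin m2,
      μ {ω | (L2 i ω : ℝ) - (L1 i ω : ℝ) < 2*c*(n:ℝ)*(ε-δ) - 1}ᶜ ≤ e2 := by
    intro i
    set A := {ω | ((m2 - 1 : ℕ) : ℝ) * p + t ≤ (L2 i ω : ℝ)} with hA
    set C := {ω | (L1 i ω : ℝ) ≤ (m1 : ℝ) * q - t} with hC
    have hsub : {ω | (L2 i ω : ℝ) - (L1 i ω : ℝ) < 2*c*(n:ℝ)*(ε-δ) - 1}ᶜ ⊆ A ∪ C := by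
      intro ω hω
      simp only [Set.mem_compl_iff, Set.mem_setOf_eq, not_lt] at hω
      by_contra hAC
      simp only [hA, hC, Set.mem_union, Set.mem_setOf_eq, not_le, not_or] at hAC
      obtain ⟨h1, h2⟩ := hAC
      have hmean : (m2:ℝ)*p - (m1:ℝ)*q = 2*c*n*(ε-δ) - n*α₂ := by
        rw [hm1e, hm2e, hα₂]; ring
      have hba : (n:ℝ)*β ≤ n*α₂ := mul_le_mul_of_nonneg_left hβa2 hn0
      rw [hm2c] at h1
      rw [ht] at h1 h2
      have e1 : ((m2:ℝ) - 1)*p = (m2:ℝ)*p - p := by ring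
      linarith
    have hA' : μ A ≤ E := by
      rw [hA]
      exact tailE (L2 i) (m2 - 1) p (le_of_lt hp0) (le_of_lt hp1) hm2p' (hL2d i)
    have hC' : μ C ≤ E := by
      rw [hC]
      exact tailE' (L1 i) m1 q (le_of_lt hq0) (le_of_lt hq1) hm1q (hL1d i)
    calc μ _ ≤ μ (A ∪ C) := measure_mono hsub
      _ ≤ μ A + μ C := measure_union_le _ _
      _ ≤ E + E := add_le_add hA' hC'
      _ ≤ e2 := h2E
  -- assemble
  set G := {ω | (∀ i : Fin m1, (M2 i ω : ℝ) - (M1 i ω : ℝ) < 2*c*(n : ℝ)*(ε - δ) + 1) ∧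
               (∀ i : Fin m2, (L2 i ω : ℝ) - (L1 i ω : ℝ) < 2*c*(n : ℝ)*(ε - δ) - 1)} with hG
  have hGeq : G = (⋂ i : Fin m1, {ω | (M2 i ω : ℝ) - (M1 i ω : ℝ) < 2*c*(n:ℝ)*(ε-δ) + 1}) ∩
      (⋂ i : Fin m2, {ω | (L2 i ω : ℝ) - (L1 i ω : ℝ) < 2*c*(n:ℝ)*(ε-δ) - 1}) := by
    ext ω; simp [hG, Set.mem_iInter]
  have hGmeas : MeasurableSet G := by
    rw [hGeq]
    apply MeasurableSet.inter
    · apply MeasurableSet.iInter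
      intro i
      exact measurableSet_lt (Measurable.sub
        (measurable_from_nat.comp (hM2m i)) (measurable_from_nat.comp (hM1m i))) measurable_const
    · apply MeasurableSet.iInter
      intro i
      exact measurableSet_lt (Measurable.sub
        (measurable_from_nat.comp (hL2m i)) (measurable_from_nat.comp (hL1m i))) measurable_const
  have hcompl : μ Gᶜ ≤ (n:ENNReal) * e2 := by
    have hsub : Gᶜ ⊆ (⋃ i : Fin m1, {ω | (M2 i ω : ℝ) - (M1 i ω : ℝ) < 2*c*(n:ℝ)*(ε-δ) + 1}ᶜ) ∪
        (⋃ i : Fin m2, {ω | (L2 i ω : ℝ) - (L1 i ω : ℝ) < 2*c*(n:ℝ)*(ε-δ) - 1}ᶜ) := by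
      rw [hGeq]
      intro ω hω
      simp only [Set.mem_compl_iff, Set.mem_inter_iff, Set.mem_iInter, not_and_or, not_forall] at hω
      rcases hω with ⟨i, hi⟩ | ⟨i, hi⟩
      · exact Or.inl (Set.mem_iUnion.2 ⟨i, hi⟩)
      · exact Or.inr (Set.mem_iUnion.2 ⟨i, hi⟩)
    calc μ Gᶜ ≤ μ _ := measure_mono hsub
      _ ≤ μ (⋃ i : Fin m1, {ω | (M2 i ω : ℝ) - (M1 i ω : ℝ) < 2*c*(n:ℝ)*(ε-δ) + 1}ᶜ) +
          μ (⋃ i : Fin m2, {ω | (L2 i ω : ℝ) - (L1 i ω : ℝ) < 2*c*(n:ℝ)*(ε-δ) - 1}ᶜ) :=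
        measure_union_le _ _
      _ ≤ (∑' i : Fin m1, μ {ω | (M2 i ω : ℝ) - (M1 i ω : ℝ) < 2*c*(n:ℝ)*(ε-δ) + 1}ᶜ) +
          (∑' i : Fin m2, μ {ω | (L2 i ω : ℝ) - (L1 i ω : ℝ) < 2*c*(n:ℝ)*(ε-δ) - 1}ᶜ) :=
        add_le_add (measure_iUnion_le _) (measure_iUnion_le _)
      _ ≤ (∑' _ : Fin m1, e2) + (∑' _ : Fin m2, e2) :=
        add_le_add (ENNReal.tsum_le_tsum voter1) (ENNReal.tsum_le_tsum voter2)
      _ = (m1 : ENNReal) * e2 + (m2 : ENNReal) * e2 := by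
        rw [tsum_fintype, tsum_fintype]
        simp [Finset.sum_const, nsmul_eq_mul]
      _ = (n : ENNReal) * e2 := by
        rw [← add_mul]
        congr 1
        rw [← hm12]
        push_cast
        ring
  have hfinal : 1 - (n:ENNReal) * e2 ≤ μ G := by
    rw [tsub_le_iff_right]
    calc (1:ENNReal) = μ Set.univ := measure_univ.symm
      _ = μ G + μ Gᶜ := (measure_add_measure_compl hGmeas).symm
      _ ≤ μ G + (n:ENNReal) * e2 := add_le_add_right hcompl _
  refine le_trans ?_ hfinal
  rw [ENNReal.ofReal_sub _ (by positivity)]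
  simp only [ENNReal.ofReal_one]
  apply tsub_le_tsub_left
  rw [ENNReal.ofReal_mul hn0, ENNReal.ofReal_natCast]
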